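/- Let u, v be unit vectors in ℝ^d, let 0 < σ ≤ 1, θ = 1 - σ², c = uᵀv. Define Σ_u = Id - uuᵀ + σ²uuᵀ and Σ_v = Id - vvᵀ + σ²vvᵀ. Then det(Σ_u)·det(Σ_v)·det(Σ_u⁻¹ + Σ_v⁻¹ - Id) = 1 - θ²c². -/

import Mathlib

open Matrix

theorem det_product_formula {d : ℕ} (u v : Fin d → ℝ)
    (hu : ∑ i, u i ^ 2 = 1) (hv : ∑ i, v i ^ 2 = 1)
    (σ : ℝ) (hσ : σ ∈ Set.Ioc (0 : ℝ) 1)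
    (θ c : ℝ) (hθ : θ = 1 - σ ^ 2) (hc : c = ∑ i, u i * v i)
    (Su Sv : Matrix (Fin d) (Fin d) ℝ)
    (hSu : Su = 1 - vecMulVec u u + σ ^ 2 • vecMulVec u u)
    (hSv : Sv = 1 - vecMulVec v v + σ ^ 2 • vecMulVec v v) :
    Su.det * Sv.det * (Su⁻¹ + Sv⁻¹ - 1).det = 1 - θ ^ 2 * c ^ 2 := by
  obtain ⟨hσ0, hσ1⟩ := hσ
  have hσ2 : (σ : ℝ) ^ 2 ≠ 0 := by positivity
  set a : ℝ := θ / σ ^ 2 with ha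
  have key : ∀ w : Fin d → ℝ, (∑ i, w i ^ 2 = 1) →
      ∀ S : Matrix (Fin d) (Fin d) ℝ,
      S = 1 - vecMulVec w w + σ ^ 2 • vecMulVec w w →
      S.det = σ ^ 2 ∧ S⁻¹ = 1 + a • vecMulVec w w := by
    intro w hw S hS
    have hWW : vecMulVec w w * vecMulVec w w = vecMulVec w w := by
      ext i j
      simp only [Matrix.mul_apply, vecMulVec_apply]
      calc ∑ k, (w i * w k) * (w k * w j) = (w i * w j) * ∑ k, w k ^ 2 := by
            rw [Finset.mul_sum]; apply Finset.sum_congr rfl; intros; ring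
        _ = w i * w j := by rw [hw, mul_one]
    have hS' : S = 1 + (-θ) • vecMulVec w w := by
      rw [hS, hθ]; ext i j
      simp [vecMulVec_apply, Matrix.one_apply, Matrix.sub_apply, Matrix.add_apply, Matrix.smul_apply]
      ring
    have hdet : S.det = σ ^ 2 := by
      have hcr : S = 1 + Matrix.replicateCol (Fin 1) (fun i => -θ * w i) * Matrix.replicateRow (Fin 1) w := by
        rw [hS']; ext i j
        simp [Matrix.mul_apply, vecMulVec_apply, Matrix.smul_apply]
        ring
      rw [hcr]; erw [Matrix.det_one_add_replicateCol_mul_replicateRow]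
      have : w ⬝ᵥ (fun i => -θ * w i) = -θ * ∑ i, w i ^ 2 := by
        simp [dotProduct, Finset.mul_sum]; apply Finset.sum_congr rfl; intros; ring
      rw [this, hw, hθ]; ring
    refine ⟨hdet, ?_⟩
    have hmul : S * (1 + a • vecMulVec w w) = 1 := by
      rw [hS']
      simp only [Matrix.mul_add, Matrix.add_mul, Matrix.mul_one, Matrix.one_mul,
        Matrix.smul_mul, Matrix.mul_smul, smul_add, smul_smul, hWW]
      have hcoef : (-θ : ℝ) + (a + a * -θ) = 0 := by
        have h1 : a * σ ^ 2 = θ := by rw [ha]; field_simp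
        linear_combination h1 - a * hθ
      have hstep : -θ • vecMulVec w w + (a • vecMulVec w w + (a * -θ) • vecMulVec w w)
          = ((-θ : ℝ) + (a + a * -θ)) • vecMulVec w w := by
        rw [add_smul, add_smul]
      rw [add_assoc, hstep, hcoef, zero_smul, add_zero]
    rw [Matrix.inv_eq_right_inv hmul]
  obtain ⟨hdu, hiu⟩ := key u hu Su hSu
  obtain ⟨hdv, hiv⟩ := key v hv Sv hSv
  -- rank-2 determinant
  set A : Matrix (Fin d) (Fin 2) ℝ := Matrix.of fun i j => if j = 0 then u i else v i with hA
  set B : Matrix (Fin 2) (Fin d) ℝ :=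
    Matrix.of fun j i => a * (if j = 0 then u i else v i) with hB
  have hsum : Su⁻¹ + Sv⁻¹ - 1 = 1 + A * B := by
    rw [hiu, hiv]; ext i j
    simp only [hA, hB, Matrix.mul_apply, Matrix.add_apply, Matrix.sub_apply, one_apply, Matrix.smul_apply,
      vecMulVec_apply, Matrix.of_apply, smul_eq_mul, Fin.sum_univ_two]
    norm_num; ring
  have hdet2 : (1 + A * B).det = (1 + B * A).det := Matrix.det_one_add_mul_comm A B
  have huu : ∑ i, a * u i * u i = a := by
    simp_rw [show ∀ i, a * u i * u i = a * u i ^ 2 from fun i => by ring, ← Finset.mul_sum,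
      hu, mul_one]
  have hvv : ∑ i, a * v i * v i = a := by
    simp_rw [show ∀ i, a * v i * v i = a * v i ^ 2 from fun i => by ring, ← Finset.mul_sum,
      hv, mul_one]
  have huv : ∑ i, a * u i * v i = a * c := by
    simp_rw [mul_assoc, ← Finset.mul_sum, ← hc]
  have hvu : ∑ i, a * v i * u i = a * c := by
    simp_rw [show ∀ i, a * v i * u i = a * (u i * v i) from fun i => by ring,
      ← Finset.mul_sum, ← hc]
  have hBA : (1 + B * A) = !![1 + a, a * c; a * c, 1 + a] := by
    ext i j
    fin_cases i <;> fin_cases j <;>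
      simp [hA, hB, Matrix.mul_apply, huu, hvv, huv, hvu]
  rw [hsum, hdet2, hBA, Matrix.det_fin_two_of, hdu, hdv, ha, hθ]
  field_simp
  ring
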